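/- Let (S_n, F_n, P), 0 ≤ n ≤ N, be a random walk with S_0 = 0 and independent steps Y_n := S_{n+1} − S_n. Set φ_i := E(e^{Y_i}) and π_n := ∏_{i=n}^{N−1} φ_i (with π_N := 1). Then for every α ∈ ℝ, P(max_{0≤n≤N} S_n ≥ α) ≤ e^{−α}·(max_{0≤n≤N} π_n^{−1})·E[e^{S_N} · 1{max_{0≤n≤N} S_n ≥ α}]. -/

import Mathlib

open MeasureTheory Filter ProbabilityTheory

/-- Product of independent integrable nonnegative (here: exponentials) random variables:
integrability and factorization of the integral. -/
lemma aux_prod_exp {Ω : Type*} {m0 : MeasurableSpace Ω} {μ : Measure Ω} [IsProbabilityMeasure μ]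
    {Y : ℕ → Ω → ℝ} (hmeas : ∀ i, Measurable (Y i))
    (hindep : iIndepFun Y μ)
    (hφ_int : ∀ i, Integrable (fun ω => Real.exp (Y i ω)) μ) (s : Finset ℕ) :
    Integrable (fun ω => ∏ i ∈ s, Real.exp (Y i ω)) μ ∧
      ∫ ω, ∏ i ∈ s, Real.exp (Y i ω) ∂μ = ∏ i ∈ s, ∫ ω, Real.exp (Y i ω) ∂μ := by
  classical
  have hE : iIndepFun (fun i ω => Real.exp (Y i ω)) μ :=
    hindep.comp (fun _ => Real.exp) fun _ => Real.measurable_exp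
  have hEmeas : ∀ i, Measurable (fun ω => Real.exp (Y i ω)) := fun i =>
    (hmeas i).exp
  induction s using Finset.induction_on with
  | empty => simp
  | @insert a s has ih =>
    have hind : IndepFun (fun ω => Real.exp (Y a ω))
        (fun ω => ∏ i ∈ s, Real.exp (Y i ω)) μ := by
      have := hE.indepFun_finsetProd_of_notMem hEmeas has
      have heq : (∏ j ∈ s, fun ω => Real.exp (Y j ω)) =
          fun ω => ∏ i ∈ s, Real.exp (Y i ω) := by
        funext ω; simp [Finset.prod_apply]
      rw [heq] at this
      exact this.symm
    have hint : Integrable (fun ω => Real.exp (Y a ω) * ∏ i ∈ s, Real.exp (Y i ω)) μ :=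
      hind.integrable_mul (hφ_int a) ih.1
    constructor
    · simpa [Finset.prod_insert has] using hint
    · have := hind.integral_fun_mul_eq_mul_integral (hφ_int a).aestronglyMeasurable ih.1.aestronglyMeasurable
      simp only [Finset.prod_insert has]
      calc ∫ ω, Real.exp (Y a ω) * ∏ i ∈ s, Real.exp (Y i ω) ∂μ
          = (∫ ω, Real.exp (Y a ω) ∂μ) * ∫ ω, ∏ i ∈ s, Real.exp (Y i ω) ∂μ := this
        _ = _ := by rw [ih.2]

/-- **Random walks with time-inhomogeneous independent steps.** With `S n = ∑_{i<n} Y i`,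
`φ i = E e^{Y i}`, `π n = ∏_{i=n}^{N-1} φ i`, one has for all `α`:
`P(max_{0 ≤ n ≤ N} S n ≥ α) ≤ e^{-α} (max_{0 ≤ n ≤ N} π n⁻¹) E[e^{S N} ; max S n ≥ α]`. -/
theorem random_walk_inhomogeneous_maximal
    {Ω : Type*} {m0 : MeasurableSpace Ω} {μ : Measure Ω} [IsProbabilityMeasure μ]
    {N : ℕ} {Y : ℕ → Ω → ℝ}
    (hmeas : ∀ i, Measurable (Y i))
    (hindep : iIndepFun Y μ)
    (S : ℕ → Ω → ℝ) (hS : ∀ n ω, S n ω = ∑ i ∈ Finset.range n, Y i ω)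
    (φ : ℕ → ℝ) (hφ : ∀ i, φ i = ∫ ω, Real.exp (Y i ω) ∂μ)
    (hφ_pos : ∀ i, 0 < φ i) (hφ_int : ∀ i, Integrable (fun ω => Real.exp (Y i ω)) μ)
    (π : ℕ → ℝ) (hπ : ∀ n, π n = ∏ i ∈ Finset.Ico n N, φ i)
    (α : ℝ) :
    (μ {ω | α ≤ (Finset.range (N + 1)).sup' (by simp) (fun n => S n ω)}).toReal ≤
      Real.exp (-α) * ((Finset.range (N + 1)).sup' (by simp) fun n => (π n)⁻¹) *
        ∫ ω in {ω | α ≤ (Finset.range (N + 1)).sup' (by simp) (fun n => S n ω)},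
          Real.exp (S N ω) ∂μ := by
  classical
  set M : ℝ := (Finset.range (N + 1)).sup' (by simp) fun n => (π n)⁻¹ with hM
  set E : Set Ω := {ω | α ≤ (Finset.range (N + 1)).sup' (by simp) (fun n => S n ω)} with hE
  -- measurability of S
  have hSm : ∀ n, Measurable (S n) := by
    intro n
    have : S n = fun ω => ∑ i ∈ Finset.range n, Y i ω := funext (hS n)
    rw [this]
    exact Finset.measurable_sum _ fun i _ => hmeas i
  -- the first-hitting decomposition
  set A : ℕ → Set Ω := fun n => {ω | α ≤ S n ω ∧ ∀ k < n, S k ω < α} with hA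
  have hAm : ∀ n, MeasurableSet (A n) := by
    intro n
    have h1 : MeasurableSet {ω | α ≤ S n ω} := measurableSet_le measurable_const (hSm n)
    have h2 : MeasurableSet {ω | ∀ k < n, S k ω < α} := by
      have : {ω | ∀ k < n, S k ω < α} = ⋂ k, ⋂ _ : k < n, {ω | S k ω < α} := by
        ext ω; simp
      rw [this]
      exact MeasurableSet.iInter fun k => MeasurableSet.iInter fun _ =>
        measurableSet_lt (hSm k) measurable_const
    exact h1.inter h2
  have hEdecomp : E = ⋃ n ∈ Finset.range (N + 1), A n := by
    ext ω
    simp only [hE, Set.mem_setOf_eq, Finset.le_sup'_iff, Set.mem_iUnion, hA,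
      Finset.mem_range]
    constructor
    · rintro ⟨n, hn, hsn⟩
      have hex : ∃ k, α ≤ S k ω := ⟨n, hsn⟩
      refine ⟨Nat.find hex, ?_, Nat.find_spec hex, fun k hk => ?_⟩
      · exact lt_of_le_of_lt (Nat.find_le hsn) hn
      · exact lt_of_not_ge (Nat.find_min hex hk)
    · rintro ⟨n, hn, hsn, -⟩
      exact ⟨n, hn, hsn⟩
  have hAdisj : (↑(Finset.range (N + 1)) : Set ℕ).Pairwise (Function.onFun Disjoint A) := by
    have hd : ∀ m n, m < n → Disjoint (A m) (A n) := fun m n h =>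
      Set.disjoint_left.2 fun ω hωm hωn => absurd hωm.1 (not_le.2 (hωn.2 m h))
    intro m _ n _ hmn
    rcases hmn.lt_or_gt with h | h
    · exact hd m n h
    · exact (hd n m h).symm
  -- integrability of exp (S n)
  have hexpS : ∀ n, (fun ω => Real.exp (S n ω)) =
      fun ω => ∏ i ∈ Finset.range n, Real.exp (Y i ω) := by
    intro n; funext ω; rw [hS, Real.exp_sum]
  have intExp : ∀ n, Integrable (fun ω => Real.exp (S n ω)) μ := by
    intro n; rw [hexpS n]
    exact (aux_prod_exp hmeas hindep hφ_int (Finset.range n)).1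
  -- key estimate for each n ≤ N
  have key : ∀ n ∈ Finset.range (N + 1),
      (μ (A n)).toReal ≤ Real.exp (-α) * M * ∫ ω in A n, Real.exp (S N ω) ∂μ := by
    intro n hn
    have hnN : n ≤ N := by simpa [Nat.lt_succ_iff] using hn
    -- Step 1: μ(A n) * exp α ≤ ∫_{A n} exp (S n)
    have step1 : (μ (A n)).toReal * Real.exp α ≤ ∫ ω in A n, Real.exp (S n ω) ∂μ := by
      have hc : ∫ _ω in A n, Real.exp α ∂μ = (μ (A n)).toReal * Real.exp α := by
        rw [setIntegral_const]; simp [smul_eq_mul, Measure.real]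
      rw [← hc]
      refine setIntegral_mono_on (integrableOn_const (measure_ne_top μ _))
        ((intExp n).integrableOn) (hAm n) fun ω hω => ?_
      exact Real.exp_le_exp.2 hω.1
    -- Step 2: ∫_{A n} exp (S N) = (∫_{A n} exp (S n)) * π n
    have step2 : ∫ ω in A n, Real.exp (S N ω) ∂μ =
        (∫ ω in A n, Real.exp (S n ω) ∂μ) * π n := by
      set X : Ω → ℝ := Set.indicator (A n) (fun ω => Real.exp (S n ω)) with hX
      set G : Ω → ℝ := fun ω => ∏ i ∈ Finset.Ico n N, Real.exp (Y i ω) with hG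
      -- independence of X and G
      have hXG : IndepFun X G μ := by
        have hdisj : Disjoint (Finset.range n) (Finset.Ico n N) := by
          simp only [Finset.disjoint_left, Finset.mem_range, Finset.mem_Ico]
          omega
        have hT : IndepFun (fun ω (i : ↑(Finset.range n)) => Y i ω)
            (fun ω (i : ↑(Finset.Ico n N)) => Y i ω) μ :=
          hindep.indepFun_finset _ _ hdisj hmeas
        -- partial sums as function of the prefix coordinates
        set ps : ℕ → (↑(Finset.range n) → ℝ) → ℝ := fun k x =>
          ∑ i ∈ Finset.range k, if h : i ∈ Finset.range n then x ⟨i, h⟩ else 0 with hps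
        have hpsm : ∀ k, Measurable (ps k) := by
          intro k
          refine Finset.measurable_sum _ fun i _ => ?_
          split
          · exact measurable_pi_apply _
          · exact measurable_const
        have hpseq : ∀ k ≤ n, ∀ ω, ps k (fun i : ↑(Finset.range n) => Y i ω) = S k ω := by
          intro k hk ω
          rw [hS, hps]
          refine Finset.sum_congr rfl fun i hi => ?_
          have : i ∈ Finset.range n := Finset.mem_range.2
            (lt_of_lt_of_le (Finset.mem_range.1 hi) hk)
          simp [this]
        set F : (↑(Finset.range n) → ℝ) → ℝ :=
          Set.indicator {x | α ≤ ps n x ∧ ∀ k < n, ps k x < α}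
            (fun x => Real.exp (ps n x)) with hF
        have hFm : Measurable F := by
          refine Measurable.indicator ((hpsm n).exp) ?_
          have h1 : MeasurableSet {x : ↑(Finset.range n) → ℝ | α ≤ ps n x} :=
            measurableSet_le measurable_const (hpsm n)
          have h2 : MeasurableSet {x : ↑(Finset.range n) → ℝ | ∀ k < n, ps k x < α} := by
            have : {x : ↑(Finset.range n) → ℝ | ∀ k < n, ps k x < α} =
                ⋂ k, ⋂ _ : k < n, {x | ps k x < α} := by ext x; simp
            rw [this]
            exact MeasurableSet.iInter fun k => MeasurableSet.iInter fun _ =>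
              measurableSet_lt (hpsm k) measurable_const
          exact h1.inter h2
        set Fg : (↑(Finset.Ico n N) → ℝ) → ℝ :=
          fun x => ∏ i : ↑(Finset.Ico n N), Real.exp (x i) with hFg
        have hFgm : Measurable Fg := by
          refine Finset.measurable_prod _ fun i _ => ?_
          exact (measurable_pi_apply i).exp
        have hXeq : X = F ∘ fun ω (i : ↑(Finset.range n)) => Y i ω := by
          funext ω
          have hiff : ω ∈ A n ↔
              (fun i : ↑(Finset.range n) => Y i ω) ∈
                {x | α ≤ ps n x ∧ ∀ k < n, ps k x < α} := by
            simp only [hA, Set.mem_setOf_eq]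
            constructor
            · rintro ⟨h1, h2⟩
              exact ⟨by rw [hpseq n le_rfl]; exact h1,
                fun k hk => by rw [hpseq k hk.le]; exact h2 k hk⟩
            · rintro ⟨h1, h2⟩
              rw [hpseq n le_rfl] at h1
              exact ⟨h1, fun k hk => by have := h2 k hk; rwa [hpseq k hk.le] at this⟩
          by_cases hω : ω ∈ A n
          · rw [hX]
            simp only [Function.comp_apply, hF]
            rw [Set.indicator_of_mem hω, Set.indicator_of_mem (hiff.1 hω),
              hpseq n le_rfl]
          · rw [hX]
            simp only [Function.comp_apply, hF]
            rw [Set.indicator_of_notMem hω,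
              Set.indicator_of_notMem (fun h => hω (hiff.2 h))]
        have hGeq : G = Fg ∘ fun ω (i : ↑(Finset.Ico n N)) => Y i ω := by
          funext ω
          simp only [Function.comp_apply, hFg, hG]
          rw [← Finset.prod_attach (Finset.Ico n N) (fun i => Real.exp (Y i ω))]
          rfl
        rw [hXeq, hGeq]
        exact hT.comp hFm hFgm
      have hXint : Integrable X μ := (intExp n).indicator (hAm n)
      have hGint : Integrable G μ := (aux_prod_exp hmeas hindep hφ_int _).1
      have hmul := hXG.integral_fun_mul_eq_mul_integral hXint.aestronglyMeasurable hGint.aestronglyMeasurable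
      have hGval : ∫ ω, G ω ∂μ = π n := by
        rw [hπ, hG, (aux_prod_exp hmeas hindep hφ_int _).2]
        exact Finset.prod_congr rfl fun i _ => (hφ i).symm
      have hXval : ∫ ω, X ω ∂μ = ∫ ω in A n, Real.exp (S n ω) ∂μ := by
        rw [hX, integral_indicator (hAm n)]
      have hprod : (fun ω => X ω * G ω) =
          Set.indicator (A n) (fun ω => Real.exp (S N ω)) := by
        funext ω
        by_cases hω : ω ∈ A n
        · rw [hX, hG]
          simp only [Set.indicator_of_mem hω]
          rw [← Real.exp_sum, ← Real.exp_add, hS n, hS N]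
          congr 1
          rw [Finset.range_eq_Ico, Finset.range_eq_Ico]
          exact Finset.sum_Ico_consecutive (fun i => Y i ω) (Nat.zero_le n) hnN
        · rw [hX]
          simp [Set.indicator_of_notMem hω]
      calc ∫ ω in A n, Real.exp (S N ω) ∂μ
          = ∫ ω, Set.indicator (A n) (fun ω => Real.exp (S N ω)) ω ∂μ :=
            (integral_indicator (hAm n)).symm
        _ = ∫ ω, X ω * G ω ∂μ := by rw [hprod]
        _ = (∫ ω, X ω ∂μ) * ∫ ω, G ω ∂μ := by
            simpa using hmul
        _ = (∫ ω in A n, Real.exp (S n ω) ∂μ) * π n := by rw [hXval, hGval]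
    -- combine
    have hπpos : 0 < π n := by
      rw [hπ]; exact Finset.prod_pos fun i _ => hφ_pos i
    have hMn : (π n)⁻¹ ≤ M := Finset.le_sup' (fun k => (π k)⁻¹) hn
    have hintnn : 0 ≤ ∫ ω in A n, Real.exp (S N ω) ∂μ :=
      setIntegral_nonneg (hAm n) fun ω _ => (Real.exp_pos _).le
    have h1 : (μ (A n)).toReal ≤
        Real.exp (-α) * (π n)⁻¹ * ∫ ω in A n, Real.exp (S N ω) ∂μ := by
      rw [step2]
      have hie : Real.exp (-α) * (π n)⁻¹ *
          ((∫ ω in A n, Real.exp (S n ω) ∂μ) * π n) =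
          Real.exp (-α) * ∫ ω in A n, Real.exp (S n ω) ∂μ := by
        field_simp
      rw [hie]
      calc (μ (A n)).toReal
          = (μ (A n)).toReal * Real.exp α * Real.exp (-α) := by
            rw [mul_assoc, ← Real.exp_add]; simp
        _ ≤ (∫ ω in A n, Real.exp (S n ω) ∂μ) * Real.exp (-α) :=
            mul_le_mul_of_nonneg_right step1 (Real.exp_pos _).le
        _ = Real.exp (-α) * ∫ ω in A n, Real.exp (S n ω) ∂μ := mul_comm _ _
    refine le_trans h1 ?_
    gcongr
  -- sum over n
  have hmeasE : μ E = ∑ n ∈ Finset.range (N + 1), μ (A n) := by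
    rw [hEdecomp]
    exact measure_biUnion_finset hAdisj fun n _ => hAm n
  have hintE : ∫ ω in E, Real.exp (S N ω) ∂μ =
      ∑ n ∈ Finset.range (N + 1), ∫ ω in A n, Real.exp (S N ω) ∂μ := by
    rw [hEdecomp]
    exact integral_biUnion_finset _ (fun n _ => hAm n) hAdisj
      fun n _ => (intExp N).integrableOn
  have htoReal : (μ E).toReal = ∑ n ∈ Finset.range (N + 1), (μ (A n)).toReal := by
    rw [hmeasE, ENNReal.toReal_sum fun n _ => measure_ne_top μ _]
  calc (μ E).toReal = ∑ n ∈ Finset.range (N + 1), (μ (A n)).toReal := htoReal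
    _ ≤ ∑ n ∈ Finset.range (N + 1),
        Real.exp (-α) * M * ∫ ω in A n, Real.exp (S N ω) ∂μ :=
          Finset.sum_le_sum key
    _ = Real.exp (-α) * M * ∫ ω in E, Real.exp (S N ω) ∂μ := by
        rw [hintE, Finset.mul_sum]
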